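/- Let n ≥ 1, let A be an n×n nonnegative real matrix such that for all i, j either A_{ij} > 0 or A_{ji} > 0, define B by B_{ij} = max(A_{ij}, (A_{ji})^{-}) where t^{-} = 1/t if t > 0 and t^{-} = 0 otherwise, and let μ = λ(B) be the max-times spectral radius of B. Let C be an n×n nonnegative real matrix such that max_{1≤k≤n} max_i (C^{⊗k})_{ii} ≤ 1. Then the minimum of ρ(A, x) over all positive vectors x ∈ ℝ_{>0}^n satisfying max_j C_{ij} x_j ≤ x_i for every i equals θ = max( μ, max_{1≤k≤n−1} max_{(i_1,…,i_k) ∈ ℕ^k, 1 ≤ i_1+⋯+i_k ≤ n−k} ( max_i (B ⊗ C^{⊗i_1} ⊗ B ⊗ C^{⊗i_2} ⊗ ⋯ ⊗ B ⊗ C^{⊗i_k})_{ii} )^{1/k} ), and this minimum is attained. -/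

import Mathlib

open scoped BigOperators

noncomputable section

/-- The max-times spectral radius (maximum geometric cycle mean) of a
nonnegative `n × n` real matrix. -/
def mtSpecRad {n : ℕ} (A : Matrix (Fin n) (Fin n) ℝ) : ℝ :=
  sSup { r : ℝ | ∃ (k : ℕ) (hk : 0 < k), k ≤ n ∧ ∃ f : Fin k → Fin n,
    r = (∏ t : Fin k, A (f t) (f ⟨((t : ℕ) + 1) % k, Nat.mod_lt _ hk⟩)) ^ ((k : ℝ)⁻¹) }

/-- The maximum cycle mean of a real `n × n` matrix (max-plus spectral radius). -/
def mpCycleMean {n : ℕ} (A : Matrix (Fin n) (Fin n) ℝ) : ℝ :=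
  sSup { r : ℝ | ∃ (k : ℕ) (hk : 0 < k), k ≤ n ∧ ∃ f : Fin k → Fin n,
    r = (∑ t : Fin k, A (f t) (f ⟨((t : ℕ) + 1) % k, Nat.mod_lt _ hk⟩)) / (k : ℝ) }

/-- Max-times matrix product. -/
def mtMul {n : ℕ} (A B : Matrix (Fin n) (Fin n) ℝ) : Matrix (Fin n) (Fin n) ℝ :=
  Matrix.of fun i j => ⨆ k : Fin n, A i k * B k j

/-- Max-times matrix powers, with `A^{⊗0} = I`. -/
def mtPow {n : ℕ} (A : Matrix (Fin n) (Fin n) ℝ) : ℕ → Matrix (Fin n) (Fin n) ℝ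
  | 0 => Matrix.of fun i j => if i = j then 1 else 0
  | (k + 1) => mtMul (mtPow A k) A

/-- Max-times Kleene star: entrywise maximum of `I, S, S^{⊗2}, …, S^{⊗(n-1)}`. -/
def mtStar {n : ℕ} (S : Matrix (Fin n) (Fin n) ℝ) : Matrix (Fin n) (Fin n) ℝ :=
  Matrix.of fun i j => ⨆ k : Fin n, mtPow S (k : ℕ) i j

/-- Max-times matrix-vector product. -/
def mtVecMul {n : ℕ} (S : Matrix (Fin n) (Fin n) ℝ) (u : Fin n → ℝ) : Fin n → ℝ :=
  fun i => ⨆ j, S i j * u j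

/-- Max-plus matrix product. -/
def mpMul {n : ℕ} (A B : Matrix (Fin n) (Fin n) ℝ) : Matrix (Fin n) (Fin n) ℝ :=
  Matrix.of fun i j => ⨆ k : Fin n, (A i k + B k j)

/-- `mpPow A k` is the max-plus power `A^{⊗(k+1)}`. -/
def mpPow {n : ℕ} (A : Matrix (Fin n) (Fin n) ℝ) : ℕ → Matrix (Fin n) (Fin n) ℝ
  | 0 => A
  | (k + 1) => mpMul (mpPow A k) A

/-- Max-plus Kleene star: `S^*_{ii} = max(0, max_{1≤k≤n-1} (S^{⊗k})_{ii})` and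
`S^*_{ij} = max_{1≤k≤n-1} (S^{⊗k})_{ij}` for `i ≠ j`. -/
def mpStar {n : ℕ} (S : Matrix (Fin n) (Fin n) ℝ) : Matrix (Fin n) (Fin n) ℝ :=
  Matrix.of fun i j =>
    if i = j then max 0 (⨆ k : Fin (n - 1), mpPow S (k : ℕ) i j)
    else ⨆ k : Fin (n - 1), mpPow S (k : ℕ) i j

/-- Max-plus matrix-vector product. -/
def mpVecMul {n : ℕ} (S : Matrix (Fin n) (Fin n) ℝ) (x : Fin n → ℝ) : Fin n → ℝ :=
  fun i => ⨆ j, (S i j + x j)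

/-- Chebyshev-like (max-times) distance between a nonnegative matrix `A` and the
rank-one reciprocal matrix with entries `x i / x j`. -/
def mtRho {n : ℕ} (A : Matrix (Fin n) (Fin n) ℝ) (x : Fin n → ℝ) : ℝ :=
  max (⨆ p : Fin n × Fin n, A p.1 p.2 * x p.2 / x p.1)
    (sSup { r : ℝ | ∃ i j, 0 < A i j ∧ r = x i / (A i j * x j) })

/-- The alternating max-times product `A ⊗ C^{⊗ i₁} ⊗ A ⊗ C^{⊗ i₂} ⊗ ⋯ ⊗ A ⊗ C^{⊗ i_k}`. -/
def mtChain {n : ℕ} (A C : Matrix (Fin n) (Fin n) ℝ) :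
    (k : ℕ) → (Fin k → ℕ) → Matrix (Fin n) (Fin n) ℝ
  | 0, _ => Matrix.of fun i j => if i = j then 1 else 0
  | (k + 1), f => mtMul (mtMul A (mtPow C (f 0))) (mtChain A C k (fun t => f t.succ))

/-- The optimal value `θ` of the constrained max-times approximation problem. -/
def mtTheta {n : ℕ} (A C : Matrix (Fin n) (Fin n) ℝ) : ℝ :=
  max (mtSpecRad A)
    (sSup { r : ℝ | ∃ k : ℕ, 0 < k ∧ k ≤ n - 1 ∧ ∃ f : Fin k → ℕ,
      1 ≤ ∑ t, f t ∧ (∑ t, f t) ≤ n - k ∧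
      r = (⨆ i, mtChain A C k f i i) ^ ((k : ℝ)⁻¹) })


set_option linter.unusedSectionVars false

namespace MT

variable {n : ℕ} [NeZero n]

abbrev Mat (n : ℕ) := Matrix (Fin n) (Fin n) ℝ

def NN (M : Mat n) : Prop := ∀ i j, 0 ≤ M i j

def idm (n : ℕ) : Mat n := Matrix.of fun i j => if i = j then 1 else 0

lemma idm_nonneg : NN (idm n) := by
  intro i j; unfold idm; simp only [Matrix.of_apply]; split <;> norm_num

-- sup helpers
lemma bddf (f : Fin n → ℝ) : BddAbove (Set.range f) := (Set.finite_range f).bddAbove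

lemma le_csup (f : Fin n → ℝ) (i : Fin n) : f i ≤ ⨆ j, f j := le_ciSup (bddf f) i

lemma csup_le {f : Fin n → ℝ} {a : ℝ} (h : ∀ i, f i ≤ a) : (⨆ j, f j) ≤ a := ciSup_le h

lemma csup_nonneg {f : Fin n → ℝ} (h : ∀ i, 0 ≤ f i) : 0 ≤ ⨆ j, f j := Real.iSup_nonneg h

lemma csup_mono {f g : Fin n → ℝ} (h : ∀ i, f i ≤ g i) : (⨆ j, f j) ≤ ⨆ j, g j :=
  csup_le fun i => (h i).trans (le_csup g i)

lemma csup_mul_right (f : Fin n → ℝ) {c : ℝ} (hc : 0 ≤ c) :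
    (⨆ j, f j) * c = ⨆ j, f j * c := by
  rcases eq_or_lt_of_le hc with h | h
  · simp [← h]
  · apply le_antisymm
    · obtain ⟨i, hi⟩ := Finite.exists_max f
      calc (⨆ j, f j) * c ≤ f i * c := by
            have := csup_le hi; nlinarith
        _ ≤ ⨆ j, f j * c := le_csup (fun j => f j * c) i
    · exact csup_le fun i => mul_le_mul_of_nonneg_right (le_csup f i) hc

lemma mul_csup_left (f : Fin n → ℝ) {c : ℝ} (hc : 0 ≤ c) :
    c * (⨆ j, f j) = ⨆ j, c * f j := by
  rw [mul_comm, csup_mul_right f hc]; simp [mul_comm]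

lemma exists_eq_csup (f : Fin n → ℝ) : ∃ i, (⨆ j, f j) = f i := by
  obtain ⟨i, hi⟩ := Finite.exists_max f
  exact ⟨i, le_antisymm (csup_le hi) (le_csup f i)⟩

-- mtMul basics
lemma mtMul_apply (M N : Mat n) (i j : Fin n) : mtMul M N i j = ⨆ k, M i k * N k j := rfl

lemma le_mtMul {M N : Mat n} (i k j : Fin n) : M i k * N k j ≤ mtMul M N i j :=
  le_csup (fun l => M i l * N l j) k

lemma mtMul_le {M N : Mat n} {i j : Fin n} {a : ℝ} (h : ∀ k, M i k * N k j ≤ a) :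
    mtMul M N i j ≤ a := csup_le h

lemma mtMul_nonneg {M N : Mat n} (hM : NN M) (hN : NN N) : NN (mtMul M N) :=
  fun i j => csup_nonneg fun k => mul_nonneg (hM i k) (hN k j)

lemma mtMul_mono {M M' N N' : Mat n} (hM : NN M) (hN : NN N)
    (h1 : ∀ i j, M i j ≤ M' i j) (h2 : ∀ i j, N i j ≤ N' i j) :
    ∀ i j, mtMul M N i j ≤ mtMul M' N' i j := by
  intro i j
  refine mtMul_le fun k => le_trans ?_ (le_mtMul i k j)
  exact mul_le_mul (h1 i k) (h2 k j) (hN k j) ((hM i k).trans (h1 i k))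


lemma mtMul_one {M : Mat n} (hM : NN M) : mtMul M (idm n) = M := by
  funext i j
  refine le_antisymm (mtMul_le fun k => ?_) ?_
  · unfold idm; simp only [Matrix.of_apply]
    rcases eq_or_ne k j with rfl | h
    · simp
    · simp [h, hM i j]
  · have := le_mtMul (M := M) (N := idm n) i j j
    simpa [idm] using this

lemma one_mtMul {M : Mat n} (hM : NN M) : mtMul (idm n) M = M := by
  funext i j
  refine le_antisymm (mtMul_le fun k => ?_) ?_
  · unfold idm; simp only [Matrix.of_apply]
    rcases eq_or_ne i k with rfl | h
    · simp
    · simp [h, hM i j]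
  · have := le_mtMul (M := idm n) (N := M) i i j
    simpa [idm] using this

lemma smul_mtMul {M N : Mat n} {c : ℝ} (hc : 0 ≤ c) :
    mtMul (c • M) N = c • mtMul M N := by
  funext i j
  show (⨆ k, (c • M) i k * N k j) = c * (⨆ k, M i k * N k j)
  rw [mul_csup_left _ hc]
  congr 1; funext k
  simp [Matrix.smul_apply, mul_assoc]

lemma mtMul_smul {M N : Mat n} {c : ℝ} (hc : 0 ≤ c) :
    mtMul M (c • N) = c • mtMul M N := by
  funext i j
  show (⨆ k, M i k * (c • N) k j) = c * (⨆ k, M i k * N k j)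
  rw [mul_csup_left _ hc]
  congr 1; funext k
  simp [Matrix.smul_apply]; ring

lemma mtMul_assoc {M N P : Mat n} (hM : NN M) (hN : NN N) (hP : NN P) :
    mtMul (mtMul M N) P = mtMul M (mtMul N P) := by
  funext i j
  refine le_antisymm (mtMul_le fun l => ?_) (mtMul_le fun k => ?_)
  · rw [mtMul_apply, csup_mul_right _ (hP l j)]
    refine csup_le fun k => ?_
    rw [mul_assoc]
    exact le_trans (mul_le_mul_of_nonneg_left (le_mtMul k l j) (hM i k)) (le_mtMul i k j)
  · rw [mtMul_apply, mul_csup_left _ (hM i k)]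
    refine csup_le fun l => ?_
    rw [← mul_assoc]
    exact le_trans (mul_le_mul_of_nonneg_right (le_mtMul i k l) (hP l j)) (le_mtMul i l j)

-- mtPow
lemma mtPow_zero (M : Mat n) : mtPow M 0 = idm n := rfl

lemma mtPow_succ (M : Mat n) (k : ℕ) : mtPow M (k + 1) = mtMul (mtPow M k) M := rfl

lemma mtPow_nonneg {M : Mat n} (hM : NN M) (k : ℕ) : NN (mtPow M k) := by
  induction k with
  | zero => exact idm_nonneg
  | succ k ih => exact mtMul_nonneg ih hM

lemma mtPow_succ_left {M : Mat n} (hM : NN M) (k : ℕ) :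
    mtPow M (k + 1) = mtMul M (mtPow M k) := by
  induction k with
  | zero => rw [mtPow_succ, mtPow_zero, one_mtMul hM, mtMul_one hM]
  | succ k ih =>
      conv_lhs => rw [mtPow_succ, ih, mtMul_assoc hM (mtPow_nonneg hM k) hM]
      rfl

-- vectors
def NNv (u : Fin n → ℝ) : Prop := ∀ i, 0 ≤ u i

lemma mtVec_apply (M : Mat n) (u : Fin n → ℝ) (i : Fin n) :
    mtVecMul M u i = ⨆ j, M i j * u j := rfl

lemma mtVec_nonneg {M : Mat n} {u : Fin n → ℝ} (hM : NN M) (hu : NNv u) :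
    NNv (mtVecMul M u) := fun i => csup_nonneg fun j => mul_nonneg (hM i j) (hu j)

lemma le_mtVec (M : Mat n) (u : Fin n → ℝ) (i j : Fin n) :
    M i j * u j ≤ mtVecMul M u i := le_csup (fun j => M i j * u j) j

lemma mtVec_le {M : Mat n} {u : Fin n → ℝ} {i : Fin n} {a : ℝ}
    (h : ∀ j, M i j * u j ≤ a) : mtVecMul M u i ≤ a := csup_le h

lemma mtVec_mono {M : Mat n} {u v : Fin n → ℝ} (hM : NN M) (h : ∀ i, u i ≤ v i) :
    ∀ i, mtVecMul M u i ≤ mtVecMul M v i := fun i =>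
  mtVec_le fun j => (mul_le_mul_of_nonneg_left (h j) (hM i j)).trans (le_mtVec M v i j)

lemma mtVec_smul {M : Mat n} {u : Fin n → ℝ} {c : ℝ} (hc : 0 ≤ c) :
    mtVecMul M (c • u) = c • mtVecMul M u := by
  funext i
  show (⨆ j, M i j * (c • u) j) = c * (⨆ j, M i j * u j)
  rw [mul_csup_left _ hc]
  congr 1; funext j; simp [Pi.smul_apply]; ring

lemma mtVec_assoc {M N : Mat n} {u : Fin n → ℝ} (hM : NN M) (hN : NN N) (hu : NNv u) :
    mtVecMul (mtMul M N) u = mtVecMul M (mtVecMul N u) := by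
  funext i
  refine le_antisymm (mtVec_le fun l => ?_) (mtVec_le fun k => ?_)
  · rw [mtMul_apply, csup_mul_right _ (hu l)]
    refine csup_le fun k => ?_
    rw [mul_assoc]
    exact le_trans (mul_le_mul_of_nonneg_left (le_mtVec N u k l) (hM i k)) (le_mtVec M _ i k)
  · rw [mtVec_apply N u, mul_csup_left _ (hM i k)]
    refine csup_le fun l => ?_
    rw [← mul_assoc]
    exact le_trans (mul_le_mul_of_nonneg_right (le_mtMul i k l) (hu l)) (le_mtVec _ u i l)

lemma mtVec_one {u : Fin n → ℝ} (hu : NNv u) : mtVecMul (idm n) u = u := by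
  funext i
  refine le_antisymm (mtVec_le fun j => ?_) ?_
  · unfold idm; simp only [Matrix.of_apply]
    rcases eq_or_ne i j with rfl | h
    · simp
    · simp [h, hu i]
  · have := le_mtVec (idm n) u i i
    simpa [idm] using this


-- walk products over vertex lists
def cp (M : Mat n) : List (Fin n) → ℝ
  | [] => 1
  | [_] => 1
  | (a :: b :: T) => M a b * cp M (b :: T)

lemma cp_nil (M : Mat n) : cp M [] = 1 := rfl
lemma cp_single (M : Mat n) (a : Fin n) : cp M [a] = 1 := rfl
lemma cp_cons (M : Mat n) (a b : Fin n) (T : List (Fin n)) :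
    cp M (a :: b :: T) = M a b * cp M (b :: T) := rfl

lemma cp_nonneg {M : Mat n} (hM : NN M) : ∀ V, 0 ≤ cp M V
  | [] => zero_le_one
  | [_] => zero_le_one
  | (a :: b :: T) => mul_nonneg (hM a b) (cp_nonneg hM (b :: T))

lemma cp_append (M : Mat n) (a : Fin n) (Q : List (Fin n)) :
    ∀ P : List (Fin n), cp M (P ++ a :: Q) = cp M (P ++ [a]) * cp M (a :: Q)
  | [] => by simp [cp_single]
  | [b] => by simp [cp_cons, cp_single]
  | (b :: c :: T) => by
      have ih := cp_append M a Q (c :: T)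
      simp only [List.cons_append] at *
      rw [cp_cons, cp_cons, ih, mul_assoc]

lemma cp_le_mtPow {M : Mat n} (hM : NN M) :
    ∀ (L : List (Fin n)) (a b : Fin n), cp M (a :: L ++ [b]) ≤ mtPow M (L.length + 1) a b
  | [], a, b => by
      have h1 : mtPow M 1 = M := by rw [mtPow_succ, mtPow_zero, one_mtMul hM]
      simp [cp_cons, cp_single, h1]
  | (c :: L), a, b => by
      have ih := cp_le_mtPow hM L c b
      have h1 : cp M (a :: (c :: L) ++ [b]) = M a c * cp M (c :: L ++ [b]) := rfl
      rw [h1]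
      calc M a c * cp M (c :: L ++ [b]) ≤ M a c * mtPow M (L.length + 1) c b :=
            mul_le_mul_of_nonneg_left ih (hM a c)
        _ ≤ mtMul M (mtPow M (L.length + 1)) a b := le_mtMul a c b
        _ = mtPow M (L.length + 1 + 1) a b := by rw [← mtPow_succ_left hM]

lemma cp_snoc (M : Mat n) (b : Fin n) :
    ∀ (a : Fin n) (L : List (Fin n)),
      cp M (a :: L ++ [b]) = cp M (a :: L) * M ((a :: L).getLast (by simp)) b
  | a, [] => by simp [cp_cons, cp_single]
  | a, (c :: L) => by
      have ih := cp_snoc M b c L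
      have h1 : cp M (a :: (c :: L) ++ [b]) = M a c * cp M (c :: L ++ [b]) := rfl
      have h2 : (a :: c :: L).getLast (by simp) = (c :: L).getLast (by simp) := by
        rw [List.getLast_cons (by simp)]
      rw [h1, ih, h2, cp_cons, mul_assoc]

lemma mtPow_le_cp {M : Mat n} (hM : NN M) :
    ∀ (k : ℕ) (a b : Fin n), ∃ L : List (Fin n), L.length = k ∧
      mtPow M (k + 1) a b ≤ cp M (a :: L ++ [b])
  | 0, a, b => by
      refine ⟨[], rfl, ?_⟩
      have h1 : mtPow M 1 = M := by rw [mtPow_succ, mtPow_zero, one_mtMul hM]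
      simp [cp_cons, cp_single, h1]
  | (k + 1), a, b => by
      obtain ⟨l, hl⟩ := exists_eq_csup (fun l => mtPow M (k + 1) a l * M l b)
      obtain ⟨L, hL, hle⟩ := mtPow_le_cp hM k a l
      refine ⟨L ++ [l], by simp [hL], ?_⟩
      have h1 : mtPow M (k + 2) a b = ⨆ j, mtPow M (k + 1) a j * M j b := rfl
      rw [h1, hl]
      have h2 : cp M (a :: (L ++ [l]) ++ [b]) = cp M (a :: L ++ [l]) * cp M (l :: [b]) := by
        have := cp_append M l [b] (a :: L)
        simpa using this
      rw [h2]
      have h3 : cp M (l :: [b]) = M l b := by simp [cp_cons, cp_single]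
      rw [h3]
      exact mul_le_mul_of_nonneg_right hle (hM l b)


lemma cp_eq_prod (M : Mat n) (d : Fin n) :
    ∀ (L : List (Fin n)) (a : Fin n),
      cp M (a :: L) = ∏ m ∈ Finset.range L.length,
        M ((a :: L).getD m d) ((a :: L).getD (m + 1) d)
  | [], a => by simp [cp_single]
  | (b :: T), a => by
      have ih := cp_eq_prod M d T b
      rw [cp_cons, ih, show (b :: T).length = T.length + 1 from rfl,
        Finset.prod_range_succ', mul_comm]
      simp [List.getD_cons_succ, List.getD_cons_zero]

lemma diag_le_cycle {M : Mat n} (hM : NN M) (k : ℕ) (i : Fin n) :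
    ∃ f : Fin (k + 1) → Fin n,
      mtPow M (k + 1) i i ≤ ∏ t : Fin (k + 1),
        M (f t) (f ⟨(t.val + 1) % (k + 1), Nat.mod_lt _ (Nat.succ_pos k)⟩) := by
  obtain ⟨L, hL, hle⟩ := mtPow_le_cp hM k i i
  refine ⟨fun t => (i :: (L ++ [i])).getD t.val i, ?_⟩
  have h0 : cp M (i :: (L ++ [i])) = ∏ m ∈ Finset.range (k + 1),
      M ((i :: (L ++ [i])).getD m i) ((i :: (L ++ [i])).getD (m + 1) i) := by
    have h := cp_eq_prod M i (L ++ [i]) i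
    rw [h]
    congr 1
    simp [hL]
  have hVlast : (i :: (L ++ [i])).getD (k + 1) i = i := by
    rw [List.getD_cons_succ]
    have h1 : k < (L ++ [i]).length := by simp [hL]
    rw [List.getD_eq_getElem _ _ h1]
    exact List.getElem_concat_length hL.symm h1
  refine hle.trans (h0.le.trans (le_of_eq ?_))
  rw [Fin.prod_univ_eq_prod_range
    (fun m => M ((i :: (L ++ [i])).getD m i) ((i :: (L ++ [i])).getD ((m + 1) % (k + 1)) i)) (k + 1)]
  refine Finset.prod_congr rfl fun m hm => ?_
  rw [Finset.mem_range] at hm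
  rcases Nat.lt_or_ge (m + 1) (k + 1) with h | h
  · rw [Nat.mod_eq_of_lt h]
  · have hm' : m = k := by omega
    subst hm'
    rw [Nat.mod_self, hVlast]
    rfl

lemma exists_dup_decomp {α : Type*} :
    ∀ (V : List α), ¬ V.Nodup → ∃ (a : α) (P Q R : List α), V = P ++ a :: (Q ++ a :: R)
  | [], h => absurd List.nodup_nil h
  | (b :: T), h => by
      rw [List.nodup_cons] at h
      push_neg at h
      by_cases hb : b ∈ T
      · obtain ⟨Q, R, rfl⟩ := List.append_of_mem hb
        exact ⟨b, [], Q, R, rfl⟩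
      · obtain ⟨a, P, Q, R, rfl⟩ := exists_dup_decomp T (h hb)
        exact ⟨a, b :: P, Q, R, rfl⟩


lemma gl_append {α : Type*} (l1 l2 : List α) (h : l2 ≠ []) :
    (l1 ++ l2).getLast? = l2.getLast? := by
  rw [List.getLast?_append]
  have hs : l2.getLast?.isSome := by rwa [List.getLast?_isSome]
  obtain ⟨a, ha⟩ := Option.isSome_iff_exists.mp hs
  rw [ha]; rfl

lemma cp_shorten {M : Mat n} (hM : NN M)
    (hcyc : ∀ m : ℕ, 1 ≤ m → m ≤ n → ∀ a, mtPow M m a a ≤ 1)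
    (P R : List (Fin n)) (a : Fin n) (Q : List (Fin n)) (hQ : Q.length + 1 ≤ n) :
    cp M (P ++ a :: (Q ++ a :: R)) ≤ cp M (P ++ a :: R) := by
  have e1 : cp M (P ++ a :: (Q ++ a :: R))
      = cp M (P ++ [a]) * cp M (a :: (Q ++ a :: R)) := cp_append M a _ P
  have e2 : cp M (a :: (Q ++ a :: R)) = cp M (a :: (Q ++ [a])) * cp M (a :: R) := by
    have := cp_append M a R (a :: Q)
    simpa using this
  have e3 : cp M (P ++ a :: R) = cp M (P ++ [a]) * cp M (a :: R) := cp_append M a R P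
  have hmid : cp M (a :: (Q ++ [a])) ≤ 1 := by
    have h1 : cp M (a :: Q ++ [a]) ≤ mtPow M (Q.length + 1) a a := cp_le_mtPow hM Q a a
    exact h1.trans (hcyc (Q.length + 1) (by omega) hQ a)
  rw [e1, e2, e3]
  have h4 : cp M (a :: (Q ++ [a])) * cp M (a :: R) ≤ 1 * cp M (a :: R) :=
    mul_le_mul_of_nonneg_right hmid (cp_nonneg hM (a :: R))
  have h5 := mul_le_mul_of_nonneg_left h4 (cp_nonneg hM (P ++ [a]))
  simpa using h5

lemma mtPow_n_le_star {M : Mat n} (hM : NN M)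
    (hcyc : ∀ m : ℕ, 1 ≤ m → m ≤ n → ∀ a, mtPow M m a a ≤ 1) (i j : Fin n) :
    mtPow M n i j ≤ ⨆ m : Fin n, mtPow M (m.val) i j := by
  have hn : 1 ≤ n := Nat.one_le_iff_ne_zero.mpr (NeZero.ne n)
  obtain ⟨n', rfl⟩ : ∃ n', n = n' + 1 := ⟨n - 1, by omega⟩
  obtain ⟨L, hL, hle⟩ := mtPow_le_cp hM n' i j
  have hnodup : ¬ (i :: (L ++ [j])).Nodup := by
    intro hnd
    have := hnd.length_le_card
    simp [hL, Fintype.card_fin] at this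
  obtain ⟨a, P, Q, R, hdec⟩ := exists_dup_decomp _ hnodup
  have hlenV : (i :: (L ++ [j])).length = n' + 2 := by simp [hL]
  have hlen' : P.length + Q.length + R.length + 2 = n' + 2 := by
    rw [hdec] at hlenV
    simp [List.length_append] at hlenV
    omega
  have hQn : Q.length + 1 ≤ n' + 1 := by omega
  have hshort := cp_shorten hM hcyc P R a Q hQn
  rw [← hdec] at hshort
  have hcpV' := hle.trans hshort
  -- the shortened walk still goes from i to j
  have hlast : (P ++ a :: R).getLast? = some j := by
    have hl1 : (i :: (L ++ [j])).getLast? = some j := by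
      rw [show (i :: (L ++ [j])) = (i :: L) ++ [j] from rfl]
      exact List.getLast?_concat
    rw [hdec] at hl1
    have hl2 : ((P ++ (a :: Q)) ++ (a :: R)).getLast? = some j := by
      rw [List.append_assoc]
      exact hl1
    rw [gl_append _ _ (by simp)] at hl2
    rw [show P ++ a :: R = P ++ (a :: R) from rfl, gl_append _ _ (by simp)]
    exact hl2
  obtain ⟨W, hW⟩ : ∃ W, P ++ a :: R = i :: W := by
    cases P with
    | nil =>
        have h : i = a := by have := congrArg List.headI hdec; simpa using this
        exact ⟨R, by simp [← h]⟩
    | cons c P2 =>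
        have hc : i = c := by have := congrArg List.headI hdec; simpa using this
        exact ⟨P2 ++ a :: R, by rw [← hc]; rfl⟩
  rw [hW] at hcpV' hlast
  have hlenW : W.length + 2 ≤ n' + 2 := by
    have := congrArg List.length hW
    simp [List.length_append] at this
    omega
  rcases List.eq_nil_or_concat W with rfl | ⟨W2, b, hW2⟩
  · have hij : i = j := by simpa using hlast
    have h1 : cp M [i] = 1 := cp_single M i
    rw [h1] at hcpV'
    have h2 : mtPow M 0 i j = 1 := by
      rw [mtPow_zero]; unfold idm; simp [hij]
    calc mtPow M (n' + 1) i j ≤ 1 := hcpV'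
      _ = mtPow M ((⟨0, Nat.succ_pos n'⟩ : Fin (n' + 1)).val) i j := h2.symm
      _ ≤ ⨆ m : Fin (n' + 1), mtPow M (m.val) i j :=
          le_csup (fun m : Fin (n' + 1) => mtPow M (m.val) i j) _
  · subst hW2
    have hbj : b = j := by
      rw [List.concat_eq_append] at hlast
      rw [show (i :: (W2 ++ [b])) = (i :: W2) ++ [b] from rfl,
        List.getLast?_concat] at hlast
      simpa using hlast
    rw [List.concat_eq_append] at hcpV'
    rw [hbj] at hcpV'
    have h1 : cp M (i :: W2 ++ [j]) ≤ mtPow M (W2.length + 1) i j := cp_le_mtPow hM W2 i j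
    have hlt : W2.length + 1 < n' + 1 := by
      rw [List.concat_eq_append] at hlenW
      simp [List.length_append] at hlenW
      omega
    calc mtPow M (n' + 1) i j ≤ mtPow M (W2.length + 1) i j := hcpV'.trans h1
      _ = mtPow M ((⟨W2.length + 1, hlt⟩ : Fin (n' + 1)).val) i j := rfl
      _ ≤ ⨆ m : Fin (n' + 1), mtPow M (m.val) i j :=
          le_csup (fun m : Fin (n' + 1) => mtPow M (m.val) i j) _


-- words
variable (P Q : Mat n)

def wp : List Bool → Mat n
  | [] => idm n
  | (b :: L) => mtMul (if b then P else Q) (wp L)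

lemma wp_nil : wp P Q [] = idm n := rfl
lemma wp_cons (b : Bool) (L : List Bool) :
    wp P Q (b :: L) = mtMul (if b then P else Q) (wp P Q L) := rfl

variable {P Q}

lemma wp_nonneg (hP : NN P) (hQ : NN Q) : ∀ L, NN (wp P Q L)
  | [] => idm_nonneg
  | (b :: L) => mtMul_nonneg (by cases b <;> simpa) (wp_nonneg hP hQ L)

lemma wp_append (hP : NN P) (hQ : NN Q) :
    ∀ L1 L2, wp P Q (L1 ++ L2) = mtMul (wp P Q L1) (wp P Q L2)
  | [], L2 => by rw [List.nil_append, wp_nil, one_mtMul (wp_nonneg hP hQ L2)]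
  | (b :: L1), L2 => by
      rw [List.cons_append, wp_cons, wp_append hP hQ L1 L2, wp_cons,
        mtMul_assoc (by cases b <;> simpa) (wp_nonneg hP hQ L1) (wp_nonneg hP hQ L2)]

lemma wp_replicate_false (hQ : NN Q) (a : ℕ) :
    wp P Q (List.replicate a false) = mtPow Q a := by
  induction a with
  | zero => rfl
  | succ a ih =>
      rw [List.replicate_succ, wp_cons, ih, if_neg (by simp), ← mtPow_succ_left hQ]

lemma mtPow_le_wp {D : Mat n} (hD : ∀ i j, D i j = max (P i j) (Q i j))
    (hP : NN P) (hQ : NN Q) :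
    ∀ (k : ℕ) (i j : Fin n), ∃ w : List Bool, w.length = k ∧
      mtPow D k i j ≤ wp P Q w i j
  | 0, i, j => ⟨[], rfl, le_refl _⟩
  | (k + 1), i, j => by
      obtain ⟨l, hl⟩ := exists_eq_csup (fun l => mtPow D k i l * D l j)
      obtain ⟨w, hw, hle⟩ := mtPow_le_wp hD hP hQ k i l
      have hD' : NN D := fun i j => le_trans (hP i j) (by rw [hD i j]; exact le_max_left _ _)
      by_cases hb : Q l j ≤ P l j
      · refine ⟨w ++ [true], by simp [hw], ?_⟩
        rw [wp_append hP hQ, wp_cons, wp_nil, mtMul_one (by simp [hP])]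
        have h1 : mtPow D (k + 1) i j = ⨆ l, mtPow D k i l * D l j := rfl
        rw [h1, hl]
        have h2 : D l j = P l j := by rw [hD l j]; exact max_eq_left hb
        rw [h2]
        calc mtPow D k i l * P l j ≤ wp P Q w i l * P l j :=
              mul_le_mul_of_nonneg_right hle (hP l j)
          _ ≤ mtMul (wp P Q w) (if true then P else Q) i j := by
              simpa using le_mtMul (M := wp P Q w) (N := P) i l j
        -- done
      · refine ⟨w ++ [false], by simp [hw], ?_⟩
        rw [wp_append hP hQ, wp_cons, wp_nil, mtMul_one (by simp [hQ])]
        have h1 : mtPow D (k + 1) i j = ⨆ l, mtPow D k i l * D l j := rfl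
        rw [h1, hl]
        have h2 : D l j = Q l j := by rw [hD l j]; exact max_eq_right (le_of_not_ge hb)
        rw [h2]
        calc mtPow D k i l * Q l j ≤ wp P Q w i l * Q l j :=
              mul_le_mul_of_nonneg_right hle (hQ l j)
          _ ≤ mtMul (wp P Q w) (if false then P else Q) i j := by
              simpa using le_mtMul (M := wp P Q w) (N := Q) i l j

lemma diag_rotate {M N : Mat n} (hM : NN M) (hN : NN N) (i : Fin n) :
    mtMul M N i i ≤ ⨆ l, mtMul N M l l := by
  refine mtMul_le fun k => ?_
  calc M i k * N k i = N k i * M i k := mul_comm _ _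
    _ ≤ mtMul N M k k := le_mtMul k i k
    _ ≤ ⨆ l, mtMul N M l l := le_csup (fun l => mtMul N M l l) k

lemma strip_falses : ∀ u : List Bool, ∃ (a : ℕ) (r : List Bool),
    u = List.replicate a false ++ r ∧ (r = [] ∨ ∃ g, r = true :: g)
  | [] => ⟨0, [], rfl, Or.inl rfl⟩
  | (true :: u) => ⟨0, true :: u, rfl, Or.inr ⟨u, rfl⟩⟩
  | (false :: u) => by
      obtain ⟨a, r, hu, hr⟩ := strip_falses u
      exact ⟨a + 1, r, by rw [List.replicate_succ, List.cons_append, ← hu], hr⟩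


lemma mtChain_zero (Bm : Mat n) (f : Fin 0 → ℕ) : mtChain Bm Q 0 f = idm n := rfl

lemma mtChain_succ (Bm : Mat n) (k : ℕ) (f : Fin (k + 1) → ℕ) :
    mtChain Bm Q (k + 1) f
      = mtMul (mtMul Bm (mtPow Q (f 0))) (mtChain Bm Q k (fun t => f t.succ)) := rfl

lemma mtChain_nonneg {Bm : Mat n} (hBm : NN Bm) (hQ : NN Q) :
    ∀ (k : ℕ) (f : Fin k → ℕ), NN (mtChain Bm Q k f)
  | 0, _ => idm_nonneg
  | (k + 1), f => mtMul_nonneg (mtMul_nonneg hBm (mtPow_nonneg hQ _))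
      (mtChain_nonneg hBm hQ k _)

lemma mtChain_allzero {Bm : Mat n} (hBm : NN Bm) (hQ : NN Q) :
    ∀ (k : ℕ) (f : Fin k → ℕ), (∀ t, f t = 0) → mtChain Bm Q k f = mtPow Bm k
  | 0, _, _ => rfl
  | (k + 1), f, hf => by
      rw [mtChain_succ, hf 0, mtPow_zero, mtMul_one hBm,
        mtChain_allzero hBm hQ k _ (fun t => hf t.succ), ← mtPow_succ_left hBm]

lemma wp_parse {Bm : Mat n} (hBm : NN Bm) (hQ : NN Q) {c : ℝ} (hc : 0 ≤ c) :
    ∀ (j : ℕ) (v : List Bool), (∃ g, v = true :: g) → v.count true = j + 1 →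
      ∃ f : Fin (j + 1) → ℕ, ((∑ t, f t) + (j + 1) = v.length) ∧
        wp (c • Bm) Q v = (c ^ (j + 1)) • mtChain Bm Q (j + 1) f := by
  have hP : NN (c • Bm) := fun i j => by
    simpa [Matrix.smul_apply] using mul_nonneg hc (hBm i j)
  intro j
  induction j with
  | zero =>
      rintro v ⟨g, rfl⟩ hcount
      obtain ⟨a, r, hg, hr⟩ := strip_falses g
      have hcr : r.count true = 0 := by
        have h1 : (true :: g).count true = g.count true + 1 := by simp
        have h2 : g.count true = r.count true := by
          rw [hg, List.count_append, List.count_replicate]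
          simp
        omega
      have hrnil : r = [] := by
        rcases hr with rfl | ⟨g', rfl⟩
        · rfl
        · simp at hcr
      subst hrnil
      rw [List.append_nil] at hg
      subst hg
      refine ⟨fun _ => a, ?_, ?_⟩
      · simp
      · rw [wp_cons, if_pos rfl, wp_replicate_false hQ, mtChain_succ]
        have h0 : (fun t : Fin 0 => (fun _ : Fin 1 => a) t.succ) = fun t : Fin 0 => a := by
          funext t; exact absurd t.isLt (by omega)
        rw [show mtChain Bm Q 0 (fun t : Fin 0 => (fun _ : Fin 1 => a) t.succ) = idm n from rfl]
        rw [mtMul_one (mtMul_nonneg hBm (mtPow_nonneg hQ a)), smul_mtMul hc, pow_one]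
  | succ j ih =>
      rintro v ⟨g, rfl⟩ hcount
      obtain ⟨a, r, hg, hr⟩ := strip_falses g
      have hcr : r.count true = j + 1 := by
        have h1 : (true :: g).count true = g.count true + 1 := by simp
        have h2 : g.count true = r.count true := by
          rw [hg, List.count_append, List.count_replicate]
          simp
        omega
      have hrt : ∃ g', r = true :: g' := by
        rcases hr with rfl | h
        · simp at hcr
        · exact h
      obtain ⟨f', hsum', heq'⟩ := ih r hrt hcr
      refine ⟨Fin.cases a f', ?_, ?_⟩
      · rw [Fin.sum_univ_succ]
        simp only [Fin.cases_zero, Fin.cases_succ]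
        have hlen : (true :: g).length = 1 + a + r.length := by
          rw [hg]; simp [List.length_append]; omega
        omega
      · rw [wp_cons, if_pos rfl, hg, wp_append hP hQ, wp_replicate_false hQ, heq']
        conv_rhs => rw [mtChain_succ Bm (j + 1) (Fin.cases a f')]
        have e0 : Fin.cases (motive := fun _ => ℕ) a f' 0 = a := rfl
        have es : (fun t : Fin (j + 1) => Fin.cases (motive := fun _ => ℕ) a f' t.succ) = f' := by
          funext t; simp
        rw [e0, es]
        rw [mtMul_smul (c := c ^ (j + 1)) (pow_nonneg hc _)]
        rw [mtMul_smul (c := c ^ (j + 1)) (pow_nonneg hc _)]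
        rw [smul_mtMul hc, smul_smul, ← pow_succ]
        congr 1
        rw [← mtMul_assoc hBm (mtPow_nonneg hQ a) (mtChain_nonneg hBm hQ (j + 1) f')]


lemma diag_pow_le_one {Bm C D : Mat n} (hBm : NN Bm) (hC : NN C) {θ : ℝ} (hθ : 0 < θ)
    (hD : ∀ i j, D i j = max ((θ⁻¹ • Bm) i j) (C i j))
    (hTr : ∀ k : ℕ, 1 ≤ k → k ≤ n → ∀ i, mtPow C k i i ≤ 1)
    (hBdiag : ∀ j : ℕ, 1 ≤ j → j ≤ n → ∀ i, mtPow Bm j i i ≤ θ ^ j)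
    (hChain : ∀ (j : ℕ) (f : Fin (j + 1) → ℕ), 1 ≤ ∑ t, f t → (∑ t, f t) + (j + 1) ≤ n →
      ∀ i, mtChain Bm C (j + 1) f i i ≤ θ ^ (j + 1)) :
    ∀ k : ℕ, 1 ≤ k → k ≤ n → ∀ i, mtPow D k i i ≤ 1 := by
  intro k hk1 hkn i
  have hP : NN (θ⁻¹ • Bm) := fun i j => by
    simpa [Matrix.smul_apply] using mul_nonneg (inv_nonneg.mpr hθ.le) (hBm i j)
  obtain ⟨w, hwlen, hwle⟩ := mtPow_le_wp hD hP hC k i i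
  refine hwle.trans ?_
  rcases Nat.eq_zero_or_pos (w.count true) with hcnt | hcnt
  · -- all false
    have hall : ∀ b ∈ w, b = false := by
      intro b hb
      cases b
      · rfl
      · exact absurd hb (List.count_eq_zero.mp hcnt)
    have hw : w = List.replicate k false := by
      rw [← hwlen]
      exact List.eq_replicate_of_mem hall
    rw [hw, wp_replicate_false hC]
    exact hTr k hk1 hkn i
  · obtain ⟨j, hj⟩ : ∃ j, w.count true = j + 1 := ⟨w.count true - 1, by omega⟩
    have htmem : true ∈ w := List.count_pos_iff.mp hcnt
    obtain ⟨F, G, hFG⟩ := List.append_of_mem htmem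
    set v : List Bool := true :: (G ++ F) with hv
    have hcv : v.count true = j + 1 := by
      rw [hv, List.count_cons]
      rw [hFG, List.count_append, List.count_cons] at hj
      rw [List.count_append]
      simp at hj ⊢
      omega
    have hvlen : v.length = k := by
      rw [hv]
      rw [hFG] at hwlen
      simp [List.length_append] at hwlen ⊢
      omega
    obtain ⟨f, hsum, heq⟩ := wp_parse hBm hC (inv_nonneg.mpr hθ.le) j v ⟨G ++ F, rfl⟩ hcv
    have hrot : wp (θ⁻¹ • Bm) C w i i ≤ ⨆ l, wp (θ⁻¹ • Bm) C v l l := by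
      rw [hFG, wp_append hP hC]
      have h1 := diag_rotate (wp_nonneg hP hC F) (wp_nonneg hP hC (true :: G)) i
      refine h1.trans ?_
      refine csup_le fun l => ?_
      have h2 : mtMul (wp (θ⁻¹ • Bm) C (true :: G)) (wp (θ⁻¹ • Bm) C F)
          = wp (θ⁻¹ • Bm) C v := by
        rw [hv, show (true :: (G ++ F)) = (true :: G) ++ F from rfl, wp_append hP hC]
      rw [h2]
      exact le_csup (fun l => wp (θ⁻¹ • Bm) C v l l) l
    refine hrot.trans (csup_le fun l => ?_)
    rw [heq]
    have hchainle : mtChain Bm C (j + 1) f l l ≤ θ ^ (j + 1) := by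
      rcases Nat.eq_zero_or_pos (∑ t, f t) with hs | hs
      · have hf0 : ∀ t, f t = 0 := by
          intro t
          have := Finset.sum_eq_zero_iff.mp hs t (Finset.mem_univ t)
          exact this
        rw [mtChain_allzero hBm hC _ f hf0]
        exact hBdiag (j + 1) (by omega) (by omega) l
      · exact hChain j f hs (by omega) l
    have hpos : (0 : ℝ) < θ ^ (j + 1) := pow_pos hθ _
    calc (θ⁻¹ ^ (j + 1) • mtChain Bm C (j + 1) f) l l
        = θ⁻¹ ^ (j + 1) * mtChain Bm C (j + 1) f l l := rfl
      _ ≤ θ⁻¹ ^ (j + 1) * θ ^ (j + 1) :=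
          mul_le_mul_of_nonneg_left hchainle (pow_nonneg (inv_nonneg.mpr hθ.le) _)
      _ = 1 := by
          rw [← mul_pow, inv_mul_cancel₀ hθ.ne', one_pow]


-- generic sup helpers
lemma le_csup' {ι : Sort*} [Finite ι] (f : ι → ℝ) (i : ι) : f i ≤ ⨆ j, f j :=
  le_ciSup ((Set.finite_range f).bddAbove) i

lemma csup_le' {ι : Sort*} [Nonempty ι] {f : ι → ℝ} {a : ℝ} (h : ∀ i, f i ≤ a) :
    (⨆ i, f i) ≤ a := ciSup_le h

-- rpow helpers
lemma pow_root {c : ℝ} (hc : 0 ≤ c) {k : ℕ} (hk : 0 < k) :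
    ((c ^ k : ℝ)) ^ ((k : ℝ)⁻¹) = c := by
  have hk' : (k : ℝ) ≠ 0 := Nat.cast_ne_zero.mpr hk.ne'
  rw [← Real.rpow_natCast c k, ← Real.rpow_mul hc, mul_inv_cancel₀ hk', Real.rpow_one]

lemma root_le_of_le {p c : ℝ} (hp : 0 ≤ p) (hc : 0 ≤ c) {k : ℕ} (hk : 0 < k)
    (h : p ≤ c ^ k) : p ^ ((k : ℝ)⁻¹) ≤ c := by
  rw [← pow_root hc hk]
  exact Real.rpow_le_rpow hp h (by positivity)

lemma le_pow_of_root_le {p c : ℝ} (hp : 0 ≤ p) {k : ℕ} (hk : 0 < k)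
    (h : p ^ ((k : ℝ)⁻¹) ≤ c) : p ≤ c ^ k := by
  have hk' : (k : ℝ) ≠ 0 := Nat.cast_ne_zero.mpr hk.ne'
  have h2 := pow_le_pow_left₀ (Real.rpow_nonneg hp _) h k
  rwa [← Real.rpow_natCast (p ^ ((k : ℝ)⁻¹)) k, ← Real.rpow_mul hp,
    inv_mul_cancel₀ hk', Real.rpow_one] at h2

-- entry bounds
lemma mtMul_entry_le {M N : Mat n} {a b : ℝ} (hM : NN M) (hN : NN N)
    (hMa : ∀ i j, M i j ≤ a) (hNb : ∀ i j, N i j ≤ b) :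
    ∀ i j, mtMul M N i j ≤ a * b := by
  intro i j
  refine mtMul_le fun k => ?_
  exact mul_le_mul (hMa i k) (hNb k j) (hN k j) ((hM i k).trans (hMa i k))

lemma mtPow_entry_le {M : Mat n} {a : ℝ} (hM : NN M) (ha : 1 ≤ a)
    (hMa : ∀ i j, M i j ≤ a) : ∀ (m : ℕ) (i j : Fin n), mtPow M m i j ≤ a ^ m := by
  intro m
  induction m with
  | zero =>
      intro i j
      rw [mtPow_zero, pow_zero]
      unfold idm; simp only [Matrix.of_apply]; split <;> norm_num
  | succ m ih =>
      intro i j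
      rw [mtPow_succ, pow_succ]
      exact mtMul_entry_le (mtPow_nonneg hM m) hM ih hMa i j

lemma mtChain_entry_le {Bm : Mat n} (hBm : NN Bm) (hQ : NN Q) {a : ℝ} (ha : 1 ≤ a)
    (hBa : ∀ i j, Bm i j ≤ a) (hQa : ∀ i j, Q i j ≤ a) :
    ∀ (k : ℕ) (f : Fin k → ℕ) (i j : Fin n),
      mtChain Bm Q k f i j ≤ a ^ (k + ∑ t, f t)
  | 0, f, i, j => by
      rw [show mtChain Bm Q 0 f = idm n from rfl]
      simp only [Finset.univ_eq_empty, Finset.sum_empty]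
      unfold idm; simp only [Matrix.of_apply]
      split <;> simp
  | (k + 1), f, i, j => by
      rw [mtChain_succ]
      have h1 : ∀ i j, mtMul Bm (mtPow Q (f 0)) i j ≤ a ^ (1 + f 0) := by
        rw [pow_add, pow_one]
        exact mtMul_entry_le hBm (mtPow_nonneg hQ _) hBa (mtPow_entry_le hQ ha hQa (f 0))
      have h2 := mtChain_entry_le hBm hQ ha hBa hQa k (fun t => f t.succ)
      have h3 := mtMul_entry_le (mtMul_nonneg hBm (mtPow_nonneg hQ _))
        (mtChain_nonneg hBm hQ k _) h1 (fun i j => h2 i j) i j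
      refine h3.trans (le_of_eq ?_)
      rw [← pow_add]
      congr 1
      rw [Fin.sum_univ_succ]
      omega

end MT

open MT

/-- For `B_{ij} = max(A_{ij}, (A_{ji})⁻)`, the minimum of `ρ(A, x)` over
positive vectors `x` satisfying `C ⊗ x ≤ x` equals `θ` (built from `B` and `C`),
and it is attained. -/
theorem mt_rho_constrained_min {n : ℕ} (hn : 1 ≤ n) (A : Matrix (Fin n) (Fin n) ℝ)
    (hA : ∀ i j, 0 ≤ A i j) (hAA : ∀ i j, 0 < A i j ∨ 0 < A j i)
    (B : Matrix (Fin n) (Fin n) ℝ) (hB : ∀ i j, B i j = max (A i j) (A j i)⁻¹)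
    (μ : ℝ) (hμ : μ = mtSpecRad B)
    (C : Matrix (Fin n) (Fin n) ℝ) (hC : ∀ i j, 0 ≤ C i j)
    (hTr : ∀ k : ℕ, 1 ≤ k → k ≤ n → ∀ i, mtPow C k i i ≤ 1) :
    IsLeast { y : ℝ | ∃ x : Fin n → ℝ, (∀ i, 0 < x i) ∧
        (∀ i, (⨆ j, C i j * x j) ≤ x i) ∧ y = mtRho A x }
      (mtTheta B C) := by

  classical
  haveI : NeZero n := ⟨by omega⟩
  have hBnn : NN B := by
    intro i j; rw [hB i j]
    rcases hAA i j with h | h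
    · exact le_max_of_le_left h.le
    · exact le_max_of_le_right (inv_nonneg.mpr h.le)
  have hCnn : NN C := hC
  have hBpos : ∀ i j, 0 < B i j := by
    intro i j; rw [hB i j]
    rcases hAA i j with h | h
    · exact lt_max_of_lt_left h
    · exact lt_max_of_lt_right (inv_pos.mpr h)
  have hBii : ∀ i, 1 ≤ B i i := by
    intro i; rw [hB i i]
    have h := (hAA i i).elim id id
    rcases le_or_gt 1 (A i i) with h1 | h1
    · exact le_max_of_le_left h1
    · exact le_max_of_le_right (one_le_inv_iff₀.mpr ⟨h, h1.le⟩)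
  -- the two supremum sets
  set S1 : Set ℝ := { r : ℝ | ∃ (k : ℕ) (hk : 0 < k), k ≤ n ∧ ∃ f : Fin k → Fin n,
    r = (∏ t : Fin k, B (f t) (f ⟨((t : ℕ) + 1) % k, Nat.mod_lt _ hk⟩)) ^ ((k : ℝ)⁻¹) }
    with hS1def
  set S2 : Set ℝ := { r : ℝ | ∃ k : ℕ, 0 < k ∧ k ≤ n - 1 ∧ ∃ f : Fin k → ℕ,
      1 ≤ ∑ t, f t ∧ (∑ t, f t) ≤ n - k ∧
      r = (⨆ i, mtChain B C k f i i) ^ ((k : ℝ)⁻¹) } with hS2def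
  have hμS1 : μ = sSup S1 := hμ
  have hθeq : mtTheta B C = max μ (sSup S2) := by rw [hμ]; rfl
  set θ := mtTheta B C with hθdef
  -- bounds for the sets
  set M0 : ℝ := max 1 (⨆ p : Fin n × Fin n, B p.1 p.2) with hM0def
  have hM0_1 : 1 ≤ M0 := le_max_left _ _
  have hBleM0 : ∀ i j, B i j ≤ M0 := fun i j =>
    le_max_of_le_right (le_csup' (fun p : Fin n × Fin n => B p.1 p.2) (i, j))
  have hS1bdd : BddAbove S1 := by
    refine ⟨M0, fun r hr => ?_⟩
    obtain ⟨k, hk, hkn, f, rfl⟩ := hr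
    refine root_le_of_le (Finset.prod_nonneg fun t _ => hBnn _ _) (by linarith) hk ?_
    calc (∏ t : Fin k, B (f t) (f ⟨((t : ℕ) + 1) % k, Nat.mod_lt _ hk⟩))
        ≤ ∏ t : Fin k, M0 := Finset.prod_le_prod (fun t _ => hBnn _ _) (fun t _ => hBleM0 _ _)
      _ = M0 ^ k := by rw [Finset.prod_const, Finset.card_univ, Fintype.card_fin]
  set M1 : ℝ := max M0 (⨆ p : Fin n × Fin n, C p.1 p.2) with hM1def
  have hM1_1 : 1 ≤ M1 := le_trans hM0_1 (le_max_left _ _)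
  have hBleM1 : ∀ i j, B i j ≤ M1 := fun i j => le_max_of_le_left (hBleM0 i j)
  have hCleM1 : ∀ i j, C i j ≤ M1 := fun i j =>
    le_max_of_le_right (le_csup' (fun p : Fin n × Fin n => C p.1 p.2) (i, j))
  have hS2bdd : BddAbove S2 := by
    refine ⟨M1 ^ n, fun r hr => ?_⟩
    obtain ⟨k, hk, hkn, f, hf1, hf2, rfl⟩ := hr
    have hdle : (⨆ i, mtChain B C k f i i) ≤ M1 ^ n := by
      refine csup_le fun i => ?_
      refine (mtChain_entry_le hBnn hCnn hM1_1 hBleM1 hCleM1 k f i i).trans ?_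
      exact pow_le_pow_right₀ hM1_1 (by omega)
    refine root_le_of_le (csup_nonneg fun i => mtChain_nonneg hBnn hCnn k f i i)
      (by positivity) hk ?_
    have h1n : (1 : ℝ) ≤ M1 ^ n := by simpa using pow_le_pow_right₀ hM1_1 (Nat.zero_le n)
    exact hdle.trans (le_self_pow₀ h1n hk.ne')
  have hμ1 : 1 ≤ μ := by
    rw [hμS1]
    have hmem : (B ⟨0, hn⟩ ⟨0, hn⟩ : ℝ) ∈ S1 := by
      refine ⟨1, one_pos, hn, fun _ => ⟨0, hn⟩, ?_⟩
      simp
    exact le_trans (hBii _) (le_csSup hS1bdd hmem)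
  have hμθ : μ ≤ θ := by rw [hθeq]; exact le_max_left _ _
  have hθ1 : 1 ≤ θ := le_trans hμ1 hμθ
  have hθpos : 0 < θ := by linarith
  -- diagonal bounds needed for D
  have hBdiag : ∀ j : ℕ, 1 ≤ j → j ≤ n → ∀ i, mtPow B j i i ≤ θ ^ j := by
    intro j hj1 hjn i
    obtain ⟨m, rfl⟩ : ∃ m, j = m + 1 := ⟨j - 1, by omega⟩
    obtain ⟨f, hfle⟩ := diag_le_cycle hBnn m i
    have hmem : ((∏ t : Fin (m + 1), B (f t)
        (f ⟨((t : ℕ) + 1) % (m + 1), Nat.mod_lt _ (Nat.succ_pos m)⟩)) ^ (((m + 1 : ℕ) : ℝ)⁻¹)) ∈ S1 :=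
      ⟨m + 1, Nat.succ_pos m, hjn, f, rfl⟩
    have h1 : (∏ t : Fin (m + 1), B (f t)
        (f ⟨((t : ℕ) + 1) % (m + 1), Nat.mod_lt _ (Nat.succ_pos m)⟩)) ≤ μ ^ (m + 1) := by
      refine le_pow_of_root_le (Finset.prod_nonneg fun t _ => hBnn _ _) (Nat.succ_pos m) ?_
      rw [hμS1]
      exact le_csSup hS1bdd hmem
    exact hfle.trans (h1.trans (pow_le_pow_left₀ (by linarith) hμθ _))
  have hChainθ : ∀ (j : ℕ) (f : Fin (j + 1) → ℕ), 1 ≤ ∑ t, f t →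
      (∑ t, f t) + (j + 1) ≤ n → ∀ i, mtChain B C (j + 1) f i i ≤ θ ^ (j + 1) := by
    intro j f hf1 hf2 i
    have hmem : ((⨆ i, mtChain B C (j + 1) f i i) ^ (((j + 1 : ℕ) : ℝ)⁻¹)) ∈ S2 :=
      ⟨j + 1, Nat.succ_pos j, by omega, f, hf1, by omega, rfl⟩
    have h1 : (⨆ i, mtChain B C (j + 1) f i i) ≤ θ ^ (j + 1) := by
      refine le_pow_of_root_le (csup_nonneg fun i => mtChain_nonneg hBnn hCnn _ f i i)
        (Nat.succ_pos j) ?_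
      refine le_trans (le_csSup hS2bdd hmem) ?_
      rw [hθeq]; exact le_max_right _ _
    exact le_trans (le_csup (fun i => mtChain B C (j + 1) f i i) i) h1
  -- the matrix D = max(θ⁻¹ B, C) and the Kleene-star vector x
  set D : Matrix (Fin n) (Fin n) ℝ :=
    Matrix.of fun i j => max ((θ⁻¹ • B) i j) (C i j) with hDdef
  have hDfun : ∀ i j, D i j = max ((θ⁻¹ • B) i j) (C i j) := fun i j => rfl
  have hPnn : NN (θ⁻¹ • B) := fun i j => by
    simpa [Matrix.smul_apply] using mul_nonneg (inv_nonneg.mpr hθpos.le) (hBnn i j)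
  have hDnn : NN D := fun i j => le_trans (hPnn i j) (by rw [hDfun]; exact le_max_left _ _)
  have hDdiag : ∀ k : ℕ, 1 ≤ k → k ≤ n → ∀ i, mtPow D k i i ≤ 1 :=
    diag_pow_le_one hBnn hCnn hθpos hDfun hTr hBdiag (fun j f h1 h2 i => hChainθ j f h1 h2 i)
  set j0 : Fin n := ⟨0, hn⟩ with hj0def
  set x : Fin n → ℝ := fun i => ⨆ m : Fin n, mtPow D (m.val) i j0 with hxdef
  have hxnn : ∀ i, 0 ≤ x i := fun i => csup_nonneg fun m => mtPow_nonneg hDnn _ i j0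
  have hD1 : mtPow D 1 = D := by rw [mtPow_succ, mtPow_zero, one_mtMul hDnn]
  have hxpos : ∀ i, 0 < x i := by
    intro i
    rcases eq_or_ne i j0 with h | hne
    · subst h
      have h1 : (1 : ℝ) ≤ mtPow D 0 j0 j0 := by rw [mtPow_zero]; unfold idm; simp
      have h2 := le_csup (fun m : Fin n => mtPow D (m.val) j0 j0) ⟨0, by omega⟩
      simp only at h2
      calc (0 : ℝ) < 1 := one_pos
        _ ≤ mtPow D 0 j0 j0 := h1
        _ ≤ x j0 := h2
    · have hn2 : 1 < n := by
        rcases Nat.lt_or_ge 1 n with h | h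
        · exact h
        · exfalso
          have : n = 1 := by omega
          subst this
          exact hne (Subsingleton.elim i j0)
      have h0 : 0 < D i j0 := by
        rw [hDfun]
        refine lt_max_of_lt_left ?_
        have : (θ⁻¹ • B) i j0 = θ⁻¹ * B i j0 := rfl
        rw [this]
        exact mul_pos (inv_pos.mpr hθpos) (hBpos i j0)
      have h2 := le_csup (fun m : Fin n => mtPow D (m.val) i j0) ⟨1, hn2⟩
      simp only at h2
      rw [hD1] at h2
      exact lt_of_lt_of_le h0 h2
  have hDx : ∀ i, mtVecMul D x i ≤ x i := by
    intro i
    refine mtVec_le fun j => ?_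
    have hxj : x j = ⨆ m : Fin n, mtPow D (m.val) j j0 := rfl
    rw [hxj, mul_csup_left _ (hDnn i j)]
    refine csup_le fun m => ?_
    have h1 : D i j * mtPow D (m.val) j j0 ≤ mtPow D (m.val + 1) i j0 := by
      rw [mtPow_succ_left hDnn]
      exact le_mtMul i j j0
    rcases Nat.lt_or_ge (m.val + 1) n with h | h
    · exact h1.trans (le_csup (fun m : Fin n => mtPow D (m.val) i j0) ⟨m.val + 1, h⟩)
    · have hm : m.val + 1 = n := by have := m.isLt; omega
      have h2 := mtPow_n_le_star hDnn hDdiag i j0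
      rw [hm] at h1
      exact h1.trans h2
  have hfeas : ∀ i, (⨆ j, C i j * x j) ≤ x i := by
    intro i
    refine le_trans (csup_le fun j => ?_) (hDx i)
    refine le_trans ?_ (le_mtVec D x i j)
    refine mul_le_mul_of_nonneg_right ?_ (hxnn j)
    rw [hDfun]; exact le_max_right _ _
  have hBx : ∀ i j, B i j * x j ≤ θ * x i := by
    intro i j
    have h1 : θ⁻¹ * (B i j * x j) ≤ x i := by
      have h2 : (θ⁻¹ • B) i j * x j ≤ D i j * x j := by
        refine mul_le_mul_of_nonneg_right ?_ (hxnn j)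
        rw [hDfun]; exact le_max_left _ _
      have h3 : (θ⁻¹ • B) i j * x j = θ⁻¹ * (B i j * x j) := by
        simp [Matrix.smul_apply, mul_assoc]
      rw [← h3]
      exact h2.trans ((le_mtVec D x i j).trans (hDx i))
    calc B i j * x j = θ * (θ⁻¹ * (B i j * x j)) := by
          rw [← mul_assoc, mul_inv_cancel₀ hθpos.ne', one_mul]
      _ ≤ θ * x i := mul_le_mul_of_nonneg_left h1 hθpos.le
  have hρxθ : mtRho A x ≤ θ := by
    rw [mtRho]
    refine max_le ?_ ?_
    · refine csup_le' fun p => ?_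
      rw [div_le_iff₀ (hxpos p.1)]
      have h1 : A p.1 p.2 ≤ B p.1 p.2 := by rw [hB]; exact le_max_left _ _
      calc A p.1 p.2 * x p.2 ≤ B p.1 p.2 * x p.2 :=
            mul_le_mul_of_nonneg_right h1 (hxnn p.2)
        _ ≤ θ * x p.1 := hBx p.1 p.2
    · refine Real.sSup_le ?_ hθpos.le
      rintro r ⟨i, j, hij, rfl⟩
      rw [div_le_iff₀ (mul_pos hij (hxpos j))]
      have h1 : (A i j)⁻¹ ≤ B j i := by rw [hB]; exact le_max_right _ _
      have h2 : (A i j)⁻¹ * x i ≤ B j i * x i :=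
        mul_le_mul_of_nonneg_right h1 (hxnn i)
      have h3 := h2.trans (hBx j i)
      calc x i = A i j * ((A i j)⁻¹ * x i) := by
            rw [← mul_assoc, mul_inv_cancel₀ hij.ne', one_mul]
        _ ≤ A i j * (θ * x j) := mul_le_mul_of_nonneg_left h3 (hA i j)
        _ = θ * (A i j * x j) := by ring
  -- lower bound: any feasible positive vector has ρ(A,x') ≥ θ
  have hlow : ∀ x' : Fin n → ℝ, (∀ i, 0 < x' i) → (∀ i, (⨆ j, C i j * x' j) ≤ x' i) →
      θ ≤ mtRho A x' := by
    intro x' hxp hxf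
    set r := mtRho A x' with hrdef
    have hx'nn : ∀ i, 0 ≤ x' i := fun i => (hxp i).le
    have hc1nn : (0 : ℝ) ≤ ⨆ p : Fin n × Fin n, A p.1 p.2 * x' p.2 / x' p.1 :=
      Real.iSup_nonneg fun p => div_nonneg (mul_nonneg (hA _ _) (hx'nn _)) (hx'nn _)
    have hr0 : 0 ≤ r := le_trans hc1nn (le_max_left _ _)
    have hc2bdd : BddAbove { s : ℝ | ∃ i j, 0 < A i j ∧ s = x' i / (A i j * x' j) } := by
      refine BddAbove.mono ?_ (Set.Finite.bddAbove (Set.finite_range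
        (fun p : Fin n × Fin n => if 0 < A p.1 p.2 then x' p.1 / (A p.1 p.2 * x' p.2) else 0)))
      rintro s ⟨i, j, hij, rfl⟩
      exact ⟨(i, j), by simp [hij]⟩
    have hBxr : ∀ i j, B i j * x' j ≤ r * x' i := by
      intro i j
      rw [hB i j]
      rw [max_mul_of_nonneg _ _ (hx'nn j)]
      refine max_le ?_ ?_
      · have h1 : A i j * x' j / x' i ≤ r := by
          refine le_trans ?_ (le_max_left _ _)
          exact le_csup' (fun p : Fin n × Fin n => A p.1 p.2 * x' p.2 / x' p.1) (i, j)
        rw [div_le_iff₀ (hxp i)] at h1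
        linarith [h1]
      · rcases lt_or_ge 0 (A j i) with hpos | hz
        · have hmem : x' j / (A j i * x' i) ∈
              { s : ℝ | ∃ i' j', 0 < A i' j' ∧ s = x' i' / (A i' j' * x' j') } :=
            ⟨j, i, hpos, rfl⟩
          have h1 : x' j / (A j i * x' i) ≤ r :=
            le_trans (le_csSup hc2bdd hmem) (le_max_right _ _)
          rw [div_le_iff₀ (mul_pos hpos (hxp i))] at h1
          calc (A j i)⁻¹ * x' j = x' j * (A j i)⁻¹ := mul_comm _ _
            _ ≤ r * (A j i * x' i) * (A j i)⁻¹ :=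
                mul_le_mul_of_nonneg_right h1 (inv_nonneg.mpr hpos.le)
            _ = r * x' i * (A j i * (A j i)⁻¹) := by ring
            _ = r * x' i := by rw [mul_inv_cancel₀ hpos.ne', mul_one]
        · have hz' : A j i = 0 := le_antisymm hz (hA j i)
          rw [hz', inv_zero, zero_mul]
          exact mul_nonneg hr0 (hx'nn i)
    -- μ ≤ r via cycles
    have hμr : μ ≤ r := by
      rw [hμS1]
      refine Real.sSup_le ?_ hr0
      rintro s ⟨k, hk, hkn, f, rfl⟩
      obtain ⟨m, rfl⟩ : ∃ m, k = m + 1 := ⟨k - 1, by omega⟩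
      have hidx : ∀ t : Fin (m + 1),
          (⟨((t : ℕ) + 1) % (m + 1), Nat.mod_lt _ hk⟩ : Fin (m + 1)) = t + 1 := by
        intro t
        apply Fin.ext
        show ((t : ℕ) + 1) % (m + 1) = ((t + 1 : Fin (m + 1)) : ℕ)
        rw [Fin.val_add, Fin.val_one', Nat.add_mod, Nat.mod_eq_of_lt t.isLt]
      have hterm : ∀ t : Fin (m + 1),
          B (f t) (f (t + 1)) ≤ r * x' (f t) / x' (f (t + 1)) := by
        intro t
        rw [le_div_iff₀ (hxp (f (t + 1)))]
        exact hBxr (f t) (f (t + 1))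
      have hprod : (∏ t : Fin (m + 1), B (f t)
            (f ⟨((t : ℕ) + 1) % (m + 1), Nat.mod_lt _ hk⟩))
          ≤ ∏ t : Fin (m + 1), (r * x' (f t) / x' (f (t + 1))) := by
        refine Finset.prod_le_prod (fun t _ => hBnn _ _) (fun t _ => ?_)
        rw [hidx t]
        exact hterm t
      have heval : (∏ t : Fin (m + 1), (r * x' (f t) / x' (f (t + 1)))) = r ^ (m + 1) := by
        rw [Finset.prod_div_distrib, Finset.prod_mul_distrib, Finset.prod_const,
          Finset.card_univ, Fintype.card_fin]
        have hperm : (∏ t : Fin (m + 1), x' (f (t + 1))) = ∏ t : Fin (m + 1), x' (f t) := by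
          exact Equiv.prod_comp (Equiv.addRight (1 : Fin (m + 1))) (fun t => x' (f t))
        rw [hperm, mul_div_assoc, div_self, mul_one]
        exact ne_of_gt (Finset.prod_pos fun t _ => hxp (f t))
      refine root_le_of_le (Finset.prod_nonneg fun t _ => hBnn _ _) hr0 hk ?_
      exact hprod.trans_eq heval
    -- chains ≤ r^k via the vector argument
    have hCvx : ∀ (m : ℕ) (l : Fin n), mtVecMul (mtPow C m) x' l ≤ x' l := by
      intro m
      induction m with
      | zero =>
          intro l
          rw [mtPow_zero, mtVec_one hx'nn]
      | succ m ih =>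
          intro l
          rw [mtPow_succ, mtVec_assoc (mtPow_nonneg hCnn m) hCnn hx'nn]
          refine le_trans (mtVec_mono (mtPow_nonneg hCnn m) (fun i => hxf i) l) (ih l)
    have hBvx : ∀ l, mtVecMul B x' l ≤ r * x' l := fun l => mtVec_le fun j => hBxr l j
    have hchainvec : ∀ (k : ℕ) (f : Fin k → ℕ) (l : Fin n),
        mtVecMul (mtChain B C k f) x' l ≤ r ^ k * x' l := by
      intro k
      induction k with
      | zero =>
          intro f l
          rw [show mtChain B C 0 f = idm n from rfl, mtVec_one hx'nn, pow_zero, one_mul]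
      | succ k ih =>
          intro f l
          have hch := mtChain_nonneg hBnn hCnn k (fun t => f t.succ)
          rw [mtChain_succ, mtVec_assoc (mtMul_nonneg hBnn (mtPow_nonneg hCnn _)) hch hx'nn,
            mtVec_assoc hBnn (mtPow_nonneg hCnn _) (mtVec_nonneg hch hx'nn)]
          have h1 : ∀ i, mtVecMul (mtChain B C k (fun t => f t.succ)) x' i
              ≤ (r ^ k) * x' i := ih _
          have h2 : ∀ i, mtVecMul (mtPow C (f 0))
              (mtVecMul (mtChain B C k (fun t => f t.succ)) x') i ≤ r ^ k * x' i := by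
            intro i
            refine le_trans (mtVec_mono (mtPow_nonneg hCnn _) h1 i) ?_
            have h3 : (fun l => r ^ k * x' l) = (r ^ k) • x' := rfl
            rw [h3, mtVec_smul (pow_nonneg hr0 k)]
            have h4 : (r ^ k • mtVecMul (mtPow C (f 0)) x') i
                = r ^ k * mtVecMul (mtPow C (f 0)) x' i := rfl
            rw [h4]
            exact mul_le_mul_of_nonneg_left (hCvx (f 0) i) (pow_nonneg hr0 k)
          refine le_trans (mtVec_mono hBnn h2 l) ?_
          have h3 : (fun i => r ^ k * x' i) = (r ^ k) • x' := rfl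
          rw [h3, mtVec_smul (pow_nonneg hr0 k)]
          have h4 : (r ^ k • mtVecMul B x') l = r ^ k * mtVecMul B x' l := rfl
          rw [h4]
          calc r ^ k * mtVecMul B x' l ≤ r ^ k * (r * x' l) :=
                mul_le_mul_of_nonneg_left (hBvx l) (pow_nonneg hr0 k)
            _ = r ^ (k + 1) * x' l := by ring
    have hS2r : sSup S2 ≤ r := by
      refine Real.sSup_le ?_ hr0
      rintro s ⟨k, hk, hkn, f, hf1, hf2, rfl⟩
      refine root_le_of_le (csup_nonneg fun i => mtChain_nonneg hBnn hCnn k f i i) hr0 hk ?_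
      refine csup_le fun i => ?_
      have h1 : mtChain B C k f i i * x' i ≤ r ^ k * x' i :=
        le_trans (le_mtVec (mtChain B C k f) x' i i) (hchainvec k f i)
      have h2 := mul_le_mul_of_nonneg_right h1 (inv_nonneg.mpr (hx'nn i))
      rwa [mul_assoc, mul_inv_cancel₀ (hxp i).ne', mul_one, mul_assoc,
        mul_inv_cancel₀ (hxp i).ne', mul_one] at h2
    rw [hθeq]
    exact max_le hμr hS2r
  constructor
  · exact ⟨x, hxpos, hfeas, le_antisymm (hlow x hxpos hfeas) hρxθ⟩
  · rintro y ⟨x', h1, h2, rfl⟩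
    exact hlow x' h1 h2

end
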